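/- For u > 0, the function s ↦ arctan(s − u) − arctan(s + u) + 2·arctan(u) is strictly positive for all s ≠ 0. -/

import Mathlib

theorem g_pos (u : ℝ) (hu : 0 < u) (s : ℝ) (hs : s ≠ 0) :
    0 < Real.arctan (s - u) - Real.arctan (s + u) + 2 * Real.arctan u := by
  set g : ℝ → ℝ := fun t => Real.arctan (t - u) - Real.arctan (t + u) + 2 * Real.arctan u with hg
  suffices h : ∀ t : ℝ, 0 < t → 0 < g t by
    have hsymm : ∀ t : ℝ, g (-t) = g t := by
      intro t
      simp only [hg]
      rw [show -t - u = -(t + u) by ring, show -t + u = -(t - u) by ring,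
        Real.arctan_neg, Real.arctan_neg]
      ring
    rcases hs.lt_or_gt with hlt | hlt
    · have := h (-s) (by linarith)
      rwa [hsymm] at this
    · exact h s hlt
  intro t ht
  have hderiv : ∀ x : ℝ, HasDerivAt g (1 / (1 + (x - u) ^ 2) - 1 / (1 + (x + u) ^ 2)) x := by
    intro x
    have h1 : HasDerivAt (fun y : ℝ => Real.arctan (y - u)) (1 / (1 + (x - u) ^ 2)) x := by
      have := (Real.hasDerivAt_arctan (x - u)).comp x ((hasDerivAt_id x).sub_const u)
      simpa [Function.comp_def] using this
    have h2 : HasDerivAt (fun y : ℝ => Real.arctan (y + u)) (1 / (1 + (x + u) ^ 2)) x := by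
      have := (Real.hasDerivAt_arctan (x + u)).comp x ((hasDerivAt_id x).add_const u)
      simpa [Function.comp_def] using this
    simpa [hg] using (h1.sub h2).add_const (2 * Real.arctan u)
  have hmono : StrictMonoOn g (Set.Ici 0) := by
    apply strictMonoOn_of_deriv_pos (convex_Ici 0)
    · exact (Continuous.continuousOn (by continuity))
    · intro x hx
      rw [interior_Ici] at hx
      rw [(hderiv x).deriv]
      have hlt : 1 + (x - u) ^ 2 < 1 + (x + u) ^ 2 := by nlinarith [hx.out]
      have hpos : 0 < 1 + (x - u) ^ 2 := by positivity
      have := one_div_lt_one_div_of_lt hpos hlt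
      linarith
  have h0 : g 0 = 0 := by
    simp only [hg]
    rw [show (0 : ℝ) - u = -u by ring, show (0 : ℝ) + u = u by ring, Real.arctan_neg]
    ring
  have := hmono (Set.self_mem_Ici) (Set.mem_Ici.2 ht.le) ht
  linarith
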